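/- Classical parity symmetry of the baker dynamics: let s(x,p) = (1−x, 1−p). For every (x,p) ∈ ℝ² such that 2x ∉ ℤ and p ∉ ℤ, the points β(s(x,p)) and s(β(x,p)) agree modulo ℤ², i.e. both components of β(s(x,p)) − s(β(x,p)) are integers; equivalently, fract applied componentwise to β(s(x,p)) equals fract applied componentwise to s(β(x,p)). -/

import Mathlib

/-- The baker covering map `β : ℝ² → ℝ²`. -/
noncomputable def bakerCover (q : ℝ × ℝ) : ℝ × ℝ :=
  if Int.fract q.1 < 1/2 then
    if Even ⌊q.2⌋ then (2 * q.1, q.2 / 2) else (2 * q.1 + 1, q.2 / 2 + 1/2)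
  else
    if Even ⌊q.2⌋ then (2 * q.1 - 1, q.2 / 2 + 1/2) else (2 * q.1, q.2 / 2)

/-- The parity map `s(x,p) = (1−x, 1−p)`. -/
noncomputable def parityMap (q : ℝ × ℝ) : ℝ × ℝ := (1 - q.1, 1 - q.2)

/-- Classical parity symmetry of the baker dynamics: away from the discontinuity set
(`2x ∉ ℤ` and `p ∉ ℤ`), `β(s(x,p))` and `s(β(x,p))` agree modulo `ℤ²`: both components
of their difference are integers; equivalently, the componentwise fractional parts agree. -/
theorem bakerCover_parity_symmetry (x p : ℝ)
    (hx : ∀ k : ℤ, 2 * x ≠ (k : ℝ)) (hp : ∀ k : ℤ, p ≠ (k : ℝ)) :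
    (∃ a b : ℤ,
        (bakerCover (parityMap (x, p))).1 - (parityMap (bakerCover (x, p))).1 = (a : ℝ) ∧
        (bakerCover (parityMap (x, p))).2 - (parityMap (bakerCover (x, p))).2 = (b : ℝ)) ∧
      Int.fract (bakerCover (parityMap (x, p))).1
          = Int.fract (parityMap (bakerCover (x, p))).1 ∧
      Int.fract (bakerCover (parityMap (x, p))).2
          = Int.fract (parityMap (bakerCover (x, p))).2 := by
  have hx0 : Int.fract x ≠ 0 := by
    intro h
    apply hx (2 * ⌊x⌋)
    have : x - ⌊x⌋ = 0 := by rw [Int.self_sub_floor]; exact h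
    push_cast
    linarith
  have hhalf : Int.fract x ≠ 1/2 := by
    intro h
    apply hx (2 * ⌊x⌋ + 1)
    have : x - ⌊x⌋ = 1/2 := by rw [Int.self_sub_floor]; exact h
    push_cast
    linarith
  have hp0 : Int.fract p ≠ 0 := by
    intro h
    apply hp ⌊p⌋
    have : p - ⌊p⌋ = 0 := by rw [Int.self_sub_floor]; exact h
    linarith
  have hppos : 0 < Int.fract p := lt_of_le_of_ne (Int.fract_nonneg p) (Ne.symm hp0)
  have hp1 : Int.fract p < 1 := Int.fract_lt_one p
  have hpf : p - ⌊p⌋ = Int.fract p := Int.self_sub_floor p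
  have hfs : Int.fract (1 - x) = 1 - Int.fract x := by
    rw [show (1:ℝ) - x = -x + (1:ℤ) by push_cast; ring, Int.fract_add_intCast, Int.fract_neg hx0]
  have hfloor : ⌊(1:ℝ) - p⌋ = -⌊p⌋ := by
    apply Int.floor_eq_iff.mpr
    push_cast
    constructor <;> linarith
  have heven : Even ⌊(1:ℝ) - p⌋ ↔ Even ⌊p⌋ := by rw [hfloor, even_neg]
  have hxpos : 0 < Int.fract x := lt_of_le_of_ne (Int.fract_nonneg x) (Ne.symm hx0)
  have hx1 : Int.fract x < 1 := Int.fract_lt_one x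
  rcases lt_or_gt_of_ne hhalf with hlt | hgt
  · have h1 : ¬ Int.fract (1 - x) < 1/2 := by rw [hfs]; linarith
    by_cases he : Even ⌊p⌋
    · have he' : Even ⌊(1:ℝ) - p⌋ := heven.mpr he
      unfold bakerCover parityMap
      simp only [bakerCover, parityMap, if_pos hlt, if_neg h1, if_pos he, if_pos he']
      refine ⟨⟨0, 0, by push_cast; ring, by push_cast; ring⟩, ?_, ?_⟩ <;>
        (apply congrArg; ring)
    · have he' : ¬ Even ⌊(1:ℝ) - p⌋ := fun h => he (heven.mp h)
      unfold bakerCover parityMap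
      simp only [bakerCover, parityMap, if_pos hlt, if_neg h1, if_neg he, if_neg he']
      refine ⟨⟨2, 0, by push_cast; ring, by push_cast; ring⟩, ?_, ?_⟩
      · rw [Int.fract_eq_fract]; exact ⟨2, by push_cast; ring⟩
      · apply congrArg; ring
  · have h1 : Int.fract (1 - x) < 1/2 := by rw [hfs]; linarith
    have hge : ¬ Int.fract x < 1/2 := by linarith
    by_cases he : Even ⌊p⌋
    · have he' : Even ⌊(1:ℝ) - p⌋ := heven.mpr he
      unfold bakerCover parityMap
      simp only [bakerCover, parityMap, if_pos h1, if_neg hge, if_pos he, if_pos he']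
      refine ⟨⟨0, 0, by push_cast; ring, by push_cast; ring⟩, ?_, ?_⟩ <;>
        (apply congrArg; ring)
    · have he' : ¬ Even ⌊(1:ℝ) - p⌋ := fun h => he (heven.mp h)
      unfold bakerCover parityMap
      simp only [bakerCover, parityMap, if_pos h1, if_neg hge, if_neg he, if_neg he']
      refine ⟨⟨2, 0, by push_cast; ring, by push_cast; ring⟩, ?_, ?_⟩
      · rw [Int.fract_eq_fract]; exact ⟨2, by push_cast; ring⟩
      · apply congrArg; ring
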